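/- arXiv:0804.0658 — 2 statements merged into one kernel-verified Lean document; each statement's English description precedes it below -/
import Mathlib

section
/- A finite mixture of Gaussian densities is identifiable: if ∑_{i=1}^p πᵢ φ(·; mᵢ, σᵢ²) = ∑_{j=1}^q ρⱼ φ(·; m'ⱼ, τⱼ²) as functions on ℝ, where all weights are positive, the pairs (mᵢ, σᵢ²) are distinct, and the pairs (m'ⱼ, τⱼ²) are distinct, then p = q and the collections {(πᵢ, mᵢ, σᵢ²)} and {(ρⱼ, m'ⱼ, τⱼ²)} coincide up to permutation. -/
noncomputable def gaussDensity (m v x : ℝ) : ℝ :=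
  (Real.sqrt (2 * Real.pi * v))⁻¹ * Real.exp (-(x - m) ^ 2 / (2 * v))

open Filter

lemma gauss_pos {m v : ℝ} (hv : 0 < v) (x : ℝ) : 0 < gaussDensity m v x :=
  mul_pos (inv_pos.2 (Real.sqrt_pos.2 (by positivity))) (Real.exp_pos _)

lemma gauss_ratio_tendsto {m0 v0 m1 v1 : ℝ} (hv0 : 0 < v0) (hv1 : 0 < v1)
    (h : v1 < v0 ∨ (v1 = v0 ∧ m1 < m0)) :
    Tendsto (fun x => gaussDensity m1 v1 x / gaussDensity m0 v0 x) atTop (nhds 0) := by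
  set a : ℝ := 1 / (2 * v0) - 1 / (2 * v1) with ha
  set b : ℝ := m1 / v1 - m0 / v0 with hb
  set c : ℝ := m0 ^ 2 / (2 * v0) - m1 ^ 2 / (2 * v1) with hc
  set C : ℝ := Real.sqrt (2 * Real.pi * v0) / Real.sqrt (2 * Real.pi * v1) with hC
  have hrw : ∀ x : ℝ, gaussDensity m1 v1 x / gaussDensity m0 v0 x
      = C * Real.exp (a * x ^ 2 + b * x + c) := by
    intro x
    have h0 : Real.sqrt (2 * Real.pi * v0) ≠ 0 := ne_of_gt (Real.sqrt_pos.2 (by positivity))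
    have h1 : Real.sqrt (2 * Real.pi * v1) ≠ 0 := ne_of_gt (Real.sqrt_pos.2 (by positivity))
    have hE : a * x ^ 2 + b * x + c = -(x - m1) ^ 2 / (2 * v1) - (-(x - m0) ^ 2 / (2 * v0)) := by
      rw [ha, hb, hc]
      field_simp
      ring
    rw [hE, Real.exp_sub]
    unfold gaussDensity
    field_simp [hC]
    rw [hC]; field_simp
  have hEbot : Tendsto (fun x : ℝ => a * x ^ 2 + b * x + c) atTop atBot := by
    apply tendsto_atBot_add_const_right
    rcases h with h | ⟨h, hm⟩
    · have haneg : a < 0 := by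
        rw [ha, sub_neg]
        exact one_div_lt_one_div_of_lt (by linarith) (by linarith)
      have : Tendsto (fun x : ℝ => x * (a * x + b)) atTop atBot := by
        apply Filter.Tendsto.atTop_mul_atBot₀ tendsto_id
        apply tendsto_atBot_add_const_right
        exact (tendsto_const_mul_atBot_of_neg haneg).2 tendsto_id
      refine this.congr' (Eventually.of_forall fun x => by ring)
    · have ha0 : a = 0 := by rw [ha, h]; simp
      have hbneg : b < 0 := by
        rw [hb, h, sub_neg]
        exact div_lt_div_of_pos_right hm hv0
      have : Tendsto (fun x : ℝ => b * x) atTop atBot :=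
        (tendsto_const_mul_atBot_of_neg hbneg).2 tendsto_id
      refine this.congr' (Eventually.of_forall fun x => by rw [ha0]; ring)
  have hexp : Tendsto (fun x : ℝ => Real.exp (a * x ^ 2 + b * x + c)) atTop (nhds 0) :=
    Real.tendsto_exp_atBot.comp hEbot
  have := hexp.const_mul C
  rw [mul_zero] at this
  exact this.congr fun x => (hrw x).symm

lemma gauss_linindep (s : Finset (ℝ × ℝ)) (c : ℝ × ℝ → ℝ)
    (hv : ∀ z ∈ s, 0 < z.2)
    (hsum : ∀ x : ℝ, ∑ z ∈ s, c z * gaussDensity z.1 z.2 x = 0) :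
    ∀ z ∈ s, c z = 0 := by
  induction s using Finset.strongInduction with
  | _ s ih =>
    rcases s.eq_empty_or_nonempty with rfl | hne
    · simp
    -- pick maximal element
    obtain ⟨z1, hz1, hmax1⟩ := s.exists_max_image (fun z => z.2) hne
    have hne2 : (s.filter (fun z => z.2 = z1.2)).Nonempty :=
      ⟨z1, Finset.mem_filter.2 ⟨hz1, rfl⟩⟩
    obtain ⟨z0, hz0f, hmax0⟩ := (s.filter (fun z => z.2 = z1.2)).exists_max_image
      (fun z => z.1) hne2
    obtain ⟨hz0, hz0v⟩ := Finset.mem_filter.1 hz0f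
    have hdom : ∀ z ∈ s, z ≠ z0 → z.2 < z0.2 ∨ (z.2 = z0.2 ∧ z.1 < z0.1) := by
      intro z hz hne'
      rcases lt_or_eq_of_le (hz0v ▸ hmax1 z hz) with hlt | heqv
      · exact Or.inl hlt
      · refine Or.inr ⟨heqv, ?_⟩
        have hzf : z ∈ s.filter (fun z => z.2 = z1.2) :=
          Finset.mem_filter.2 ⟨hz, by rw [← hz0v, heqv]⟩
        rcases lt_or_eq_of_le (hmax0 z hzf) with h | h
        · exact h
        · exact absurd (Prod.ext h heqv) hne'
    have hv0 : 0 < z0.2 := hv z0 hz0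
    -- limit argument: c z0 = 0
    have hc0 : c z0 = 0 := by
      set F : ℝ → ℝ := fun x => ∑ z ∈ s, c z * (gaussDensity z.1 z.2 x / gaussDensity z0.1 z0.2 x)
      have hF0 : ∀ x, F x = 0 := by
        intro x
        have : F x = (∑ z ∈ s, c z * gaussDensity z.1 z.2 x) / gaussDensity z0.1 z0.2 x := by
          rw [Finset.sum_div]
          exact Finset.sum_congr rfl fun z _ => (mul_div_assoc _ _ _).symm
        rw [this, hsum x, zero_div]
      set L : ℝ × ℝ → ℝ := fun z => if z = z0 then c z0 else 0
      have hFt : Tendsto F atTop (nhds (∑ z ∈ s, L z)) := by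
        apply tendsto_finset_sum
        intro z hz
        by_cases hzz : z = z0
        · subst hzz
          simp only [L, if_pos rfl]
          have : (fun x => c z * (gaussDensity z.1 z.2 x / gaussDensity z.1 z.2 x))
              = fun _ => c z := by
            funext x
            rw [div_self (ne_of_gt (gauss_pos hv0 x)), mul_one]
          rw [this]
          exact tendsto_const_nhds
        · simp only [L, if_neg hzz]
          have := (gauss_ratio_tendsto hv0 (hv z hz) (hdom z hz hzz)).const_mul (c z)
          rwa [mul_zero] at this
      have hsumL : ∑ z ∈ s, L z = c z0 := by
        rw [Finset.sum_eq_single z0]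
        · simp [L]
        · intro z _ hzz; simp [L, hzz]
        · intro h; exact absurd hz0 h
      rw [hsumL] at hFt
      have : Tendsto F atTop (nhds 0) := by
        rw [show F = fun _ => (0:ℝ) from funext hF0]
        exact tendsto_const_nhds
      exact tendsto_nhds_unique hFt this
    -- induct on s.erase z0
    have hrec := ih (s.erase z0) (Finset.erase_ssubset hz0)
      (fun z hz => hv z (Finset.mem_of_mem_erase hz))
      (fun x => by
        have := hsum x
        rwa [← Finset.add_sum_erase s _ hz0, hc0, zero_mul, zero_add] at this)
    intro z hz
    by_cases hzz : z = z0
    · rw [hzz]; exact hc0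
    · exact hrec z (Finset.mem_erase.2 ⟨hzz, hz⟩)

theorem stmt9 (p q : ℕ) (π : Fin p → ℝ) (m v : Fin p → ℝ)
    (ρ : Fin q → ℝ) (m' τ : Fin q → ℝ)
    (hπ : ∀ i, 0 < π i) (hρ : ∀ j, 0 < ρ j)
    (hv : ∀ i, 0 < v i) (hτ : ∀ j, 0 < τ j)
    (hdp : Function.Injective (fun i => (m i, v i)))
    (hdq : Function.Injective (fun j => (m' j, τ j)))
    (heq : ∀ x : ℝ, ∑ i, π i * gaussDensity (m i) (v i) x =
      ∑ j, ρ j * gaussDensity (m' j) (τ j) x) :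
    p = q ∧ ∃ e : Fin p ≃ Fin q, ∀ i,
      ρ (e i) = π i ∧ m' (e i) = m i ∧ τ (e i) = v i := by
  classical
  set A : Finset (ℝ × ℝ) := Finset.image (fun i => (m i, v i)) Finset.univ with hA
  set B : Finset (ℝ × ℝ) := Finset.image (fun j => (m' j, τ j)) Finset.univ with hB
  set s : Finset (ℝ × ℝ) := A ∪ B with hs
  set c : ℝ × ℝ → ℝ := fun z =>
    (∑ i ∈ Finset.univ.filter (fun i => (m i, v i) = z), π i) -
    (∑ j ∈ Finset.univ.filter (fun j => (m' j, τ j) = z), ρ j) with hc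
  have hposv : ∀ z ∈ s, 0 < z.2 := by
    intro z hz
    rcases Finset.mem_union.1 hz with h | h
    · obtain ⟨i, _, rfl⟩ := Finset.mem_image.1 h; exact hv i
    · obtain ⟨j, _, rfl⟩ := Finset.mem_image.1 h; exact hτ j
  have key : ∀ z ∈ s, c z = 0 := by
    apply gauss_linindep s c hposv
    intro x
    have h1 : ∑ z ∈ s, (∑ i ∈ Finset.univ.filter (fun i => (m i, v i) = z), π i)
        * gaussDensity z.1 z.2 x = ∑ i, π i * gaussDensity (m i) (v i) x := by
      rw [← Finset.sum_fiberwise_of_maps_to (g := fun i => (m i, v i))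
        (fun i _ => Finset.mem_union_left _ (Finset.mem_image_of_mem _ (Finset.mem_univ i)))
        (fun i => π i * gaussDensity (m i) (v i) x)]
      refine Finset.sum_congr rfl fun z _ => ?_
      rw [Finset.sum_mul]
      refine Finset.sum_congr rfl fun i hi => ?_
      have := (Finset.mem_filter.1 hi).2
      rw [← this]
    have h2 : ∑ z ∈ s, (∑ j ∈ Finset.univ.filter (fun j => (m' j, τ j) = z), ρ j)
        * gaussDensity z.1 z.2 x = ∑ j, ρ j * gaussDensity (m' j) (τ j) x := by
      rw [← Finset.sum_fiberwise_of_maps_to (g := fun j => (m' j, τ j))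
        (fun j _ => Finset.mem_union_right _ (Finset.mem_image_of_mem _ (Finset.mem_univ j)))
        (fun j => ρ j * gaussDensity (m' j) (τ j) x)]
      refine Finset.sum_congr rfl fun z _ => ?_
      rw [Finset.sum_mul]
      refine Finset.sum_congr rfl fun j hj => ?_
      have := (Finset.mem_filter.1 hj).2
      rw [← this]
    calc ∑ z ∈ s, c z * gaussDensity z.1 z.2 x
        = ∑ z ∈ s, ((∑ i ∈ Finset.univ.filter (fun i => (m i, v i) = z), π i)
            * gaussDensity z.1 z.2 x
          - (∑ j ∈ Finset.univ.filter (fun j => (m' j, τ j) = z), ρ j)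
            * gaussDensity z.1 z.2 x) := by
          refine Finset.sum_congr rfl fun z _ => ?_; rw [hc]; ring
      _ = 0 := by rw [Finset.sum_sub_distrib, h1, h2, heq x, sub_self]
  -- fibers are singletons
  have hfibp : ∀ i : Fin p, Finset.univ.filter (fun i' => (m i', v i') = (m i, v i)) = {i} := by
    intro i
    ext i'
    simp only [Finset.mem_filter, Finset.mem_univ, true_and, Finset.mem_singleton]
    constructor
    · intro h; exact hdp h
    · rintro rfl; rfl
  have hfibq : ∀ j : Fin q, Finset.univ.filter (fun j' => (m' j', τ j') = (m' j, τ j)) = {j} := by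
    intro j
    ext j'
    simp only [Finset.mem_filter, Finset.mem_univ, true_and, Finset.mem_singleton]
    constructor
    · intro h; exact hdq h
    · rintro rfl; rfl
  -- for each i there is j with matching params and weight
  have hmatch : ∀ i : Fin p, ∃ j : Fin q, (m' j, τ j) = (m i, v i) := by
    intro i
    have hz : (m i, v i) ∈ s :=
      Finset.mem_union_left _ (Finset.mem_image_of_mem _ (Finset.mem_univ i))
    have hci := key _ hz
    rw [hc] at hci
    have hip : ∑ i' ∈ Finset.univ.filter (fun i' => (m i', v i') = (m i, v i)), π i' = π i := by
      rw [hfibp i, Finset.sum_singleton]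
    have : ∑ j ∈ Finset.univ.filter (fun j => (m' j, τ j) = (m i, v i)), ρ j = π i := by
      simp only at hci
      linarith [hci, hip]
    have hne : (Finset.univ.filter (fun j => (m' j, τ j) = (m i, v i))).Nonempty := by
      apply Finset.nonempty_of_sum_ne_zero (f := ρ)
      rw [this]; exact ne_of_gt (hπ i)
    obtain ⟨j, hj⟩ := hne
    exact ⟨j, (Finset.mem_filter.1 hj).2⟩
  have hmatch' : ∀ j : Fin q, ∃ i : Fin p, (m i, v i) = (m' j, τ j) := by
    intro j
    have hz : (m' j, τ j) ∈ s :=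
      Finset.mem_union_right _ (Finset.mem_image_of_mem _ (Finset.mem_univ j))
    have hci := key _ hz
    rw [hc] at hci
    have hip : ∑ j' ∈ Finset.univ.filter (fun j' => (m' j', τ j') = (m' j, τ j)), ρ j' = ρ j := by
      rw [hfibq j, Finset.sum_singleton]
    have : ∑ i ∈ Finset.univ.filter (fun i => (m i, v i) = (m' j, τ j)), π i = ρ j := by
      simp only at hci
      linarith [hci, hip]
    have hne : (Finset.univ.filter (fun i => (m i, v i) = (m' j, τ j))).Nonempty := by
      apply Finset.nonempty_of_sum_ne_zero (f := π)
      rw [this]; exact ne_of_gt (hρ j)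
    obtain ⟨i, hi⟩ := hne
    exact ⟨i, (Finset.mem_filter.1 hi).2⟩
  choose f hf using hmatch
  choose g hg using hmatch'
  have hgf : ∀ i, g (f i) = i := by
    intro i
    apply hdp
    simp only
    rw [hg (f i), hf i]
  have hfg : ∀ j, f (g j) = j := by
    intro j
    apply hdq
    simp only
    rw [hf (g j), hg j]
  let e : Fin p ≃ Fin q := ⟨f, g, hgf, hfg⟩
  have hei : ∀ i, e i = f i := fun _ => rfl
  refine ⟨by simpa using Fintype.card_congr e, e, fun i => ?_⟩
  rw [hei]
  have hmm : m' (f i) = m i := congrArg Prod.fst (hf i)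
  have hvv : τ (f i) = v i := congrArg Prod.snd (hf i)
  refine ⟨?_, hmm, hvv⟩
  -- weight equality
  have hz : (m i, v i) ∈ s :=
    Finset.mem_union_left _ (Finset.mem_image_of_mem _ (Finset.mem_univ i))
  have hci := key _ hz
  rw [hc] at hci
  have hip : ∑ i' ∈ Finset.univ.filter (fun i' => (m i', v i') = (m i, v i)), π i' = π i := by
    rw [hfibp i, Finset.sum_singleton]
  have hjq : Finset.univ.filter (fun j => (m' j, τ j) = (m i, v i)) = {f i} := by
    have : (m i, v i) = (m' (f i), τ (f i)) := (hf i).symm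
    rw [this, hfibq (f i)]
  have hiq : ∑ j ∈ Finset.univ.filter (fun j => (m' j, τ j) = (m i, v i)), ρ j = ρ (f i) := by
    rw [hjq, Finset.sum_singleton]
  simp only at hci
  linarith [hci, hip, hiq]
end

section
/- Let q₁,…,q_r ≥ 0 with ∑ⱼ qⱼ = 1 and let θ₁,…,θ_r, θ⁰ ∈ ℝ^d. If additionally sⱼ ∈ ℝ and the linear combination ∑ᵢ πᵢ⁰ (∑_{j∈Bᵢ} qⱼθⱼ − θᵢ⁰)ᵀ gᵢ' + ∑ᵢ sᵢ g_{θᵢ⁰} + (1/2)∑ᵢ [2sᵢ(∑_{j∈Bᵢ} qⱼθⱼ − θᵢ⁰)ᵀ gᵢ' + πᵢ⁰ ∑_{j∈Bᵢ} qⱼ (θⱼ − θᵢ⁰)ᵀ gᵢ'' (θⱼ − θᵢ⁰)] = 0 in L²(μ), where the families (g_{θᵢ⁰}), (gᵢ'), (gᵢ'') are linearly independent in L²(μ), πᵢ⁰ > 0, and qⱼ > 0, then sᵢ = 0 for all i and θⱼ = θᵢ⁰ for all j ∈ Bᵢ. -/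
open MeasureTheory

theorem stmt17 {E : Type*} [MeasurableSpace E] (μ : Measure E)
    (p p₀ d : ℕ) (B : Fin p → Fin p₀) (hB : Function.Surjective B)
    (q : Fin p → ℝ) (hq : ∀ j, 0 < q j)
    (hq1 : ∀ i, ∑ j ∈ Finset.univ.filter (fun j => B j = i), q j = 1)
    (θ : Fin p → Fin d → ℝ) (θ₀ : Fin p₀ → Fin d → ℝ)
    (π₀ : Fin p₀ → ℝ) (hπ₀ : ∀ i, 0 < π₀ i)
    (s : Fin p₀ → ℝ)
    (g0 : Fin p₀ → Lp ℝ 2 μ) (G1 : Fin p₀ → Fin d → Lp ℝ 2 μ)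
    (G2 : Fin p₀ → Fin d → Lp ℝ 2 μ)
    (hind : LinearIndependent ℝ
      (Sum.elim (fun i : Fin p₀ => g0 i)
        (Sum.elim (fun x : Fin p₀ × Fin d => G1 x.1 x.2)
          (fun x : Fin p₀ × Fin d => G2 x.1 x.2))))
    (heq :
      (∑ i, ∑ a,
          (π₀ i * ((∑ j ∈ Finset.univ.filter (fun j => B j = i), q j * θ j a)
            - θ₀ i a)) • G1 i a)
      + (∑ i, s i • g0 i)
      + (1 / 2 : ℝ) •
        (∑ i,
          ((∑ a, (2 * s i * ((∑ j ∈ Finset.univ.filter (fun j => B j = i),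
              q j * θ j a) - θ₀ i a)) • G1 i a)
          + ∑ j ∈ Finset.univ.filter (fun j => B j = i), ∑ a,
              (π₀ i * q j * (θ j a - θ₀ i a) ^ 2) • G2 i a)) = 0) :
    (∀ i, s i = 0) ∧ ∀ j, θ j = θ₀ (B j) := by
  have hswap :
      (∑ i, ((∑ a, (2 * s i * ((∑ j ∈ Finset.univ.filter (fun j => B j = i),
              q j * θ j a) - θ₀ i a)) • G1 i a)
          + ∑ j ∈ Finset.univ.filter (fun j => B j = i), ∑ a,
              (π₀ i * q j * (θ j a - θ₀ i a) ^ 2) • G2 i a))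
      = (∑ i, ((∑ a, (2 * s i * ((∑ j ∈ Finset.univ.filter (fun j => B j = i),
              q j * θ j a) - θ₀ i a)) • G1 i a)
          + ∑ a, ∑ j ∈ Finset.univ.filter (fun j => B j = i),
              (π₀ i * q j * (θ j a - θ₀ i a) ^ 2) • G2 i a)) := by
    refine Finset.sum_congr rfl fun i _ => ?_
    rw [Finset.sum_comm]
  rw [hswap] at heq
  set c : (Fin p₀) ⊕ ((Fin p₀ × Fin d) ⊕ (Fin p₀ × Fin d)) → ℝ :=
    Sum.elim (fun i => s i)
      (Sum.elim
        (fun x => π₀ x.1 * ((∑ j ∈ Finset.univ.filter (fun j => B j = x.1),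
              q j * θ j x.2) - θ₀ x.1 x.2)
          + (1 / 2) * (2 * s x.1 * ((∑ j ∈ Finset.univ.filter (fun j => B j = x.1),
              q j * θ j x.2) - θ₀ x.1 x.2)))
        (fun x => ∑ j ∈ Finset.univ.filter (fun j => B j = x.1),
            (1 / 2) * (π₀ x.1 * q j * (θ j x.2 - θ₀ x.1 x.2) ^ 2))) with hc
  have hsum : ∑ v, c v •
      (Sum.elim (fun i : Fin p₀ => g0 i)
        (Sum.elim (fun x : Fin p₀ × Fin d => G1 x.1 x.2)
          (fun x : Fin p₀ × Fin d => G2 x.1 x.2))) v = 0 := by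
    rw [Fintype.sum_sum_type, Fintype.sum_sum_type]
    simp only [hc, Sum.elim_inl, Sum.elim_inr, Fintype.sum_prod_type]
    rw [← heq]
    simp only [Finset.smul_sum, smul_smul, add_smul, Finset.sum_smul,
      Finset.sum_add_distrib, smul_add]
    abel
  have hzero := Fintype.linearIndependent_iff.mp hind c hsum
  have hs : ∀ i, s i = 0 := fun i => hzero (Sum.inl i)
  refine ⟨hs, fun j => ?_⟩
  funext a
  have h2 := hzero (Sum.inr (Sum.inr (B j, a)))
  simp only [hc, Sum.elim_inr] at h2
  have hnn : ∀ j' ∈ Finset.univ.filter (fun j' => B j' = B j),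
      0 ≤ (1 / 2 : ℝ) * (π₀ (B j) * q j' * (θ j' a - θ₀ (B j) a) ^ 2) := fun j' _ => by
    have h1 := (hπ₀ (B j)).le
    have h2 := (hq j').le
    positivity
  have hmem : j ∈ Finset.univ.filter (fun j' => B j' = B j) := by simp
  have hterm := (Finset.sum_eq_zero_iff_of_nonneg hnn).mp h2 j hmem
  have h1 := (hπ₀ (B j)).ne'
  have hq' := (hq j).ne'
  have hsq : (θ j a - θ₀ (B j) a) ^ 2 = 0 := by
    rcases mul_eq_zero.mp hterm with h | h
    · norm_num at h
    · rcases mul_eq_zero.mp h with h' | h'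
      · exact absurd h' (mul_ne_zero h1 hq')
      · exact h'
  have := pow_eq_zero_iff (n := 2) (by norm_num) |>.mp hsq
  linarith
end
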